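/- For every integer u ≥ 0, lim_{n→∞} (√n / 2^n) · C(n-1, ⌊(n+u)/2⌋) = 1/√(2π). -/

import Mathlib

open Filter Real Nat

lemma cb_eq_stirling (m : ℕ) (hm : 1 ≤ m) :
    Real.sqrt m / 4 ^ m * (Nat.centralBinom m) =
      Stirling.stirlingSeq (2 * m) / (Stirling.stirlingSeq m) ^ 2 := by
  have hm0 : (0:ℝ) < m := by exact_mod_cast hm
  have hsm : (0:ℝ) < Real.sqrt m := Real.sqrt_pos.2 hm0
  have hfacn : (2*m)! = Nat.centralBinom m * m ! * m ! := by
    have := Nat.choose_mul_factorial_mul_factorial (by omega : m ≤ 2*m)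
    rw [show 2*m - m = m by omega] at this
    rw [Nat.centralBinom, ← this]
  have hfac : ((2*m)! : ℝ) = (Nat.centralBinom m : ℝ) * m ! * m ! := by exact_mod_cast hfacn
  have he : (0:ℝ) < Real.exp 1 := Real.exp_pos 1
  have hpow : (0:ℝ) < ((m:ℝ) / Real.exp 1) ^ m := by positivity
  have hs2m : Real.sqrt (2 * (2*m) : ℝ) = 2 * Real.sqrt m := by
    rw [show (2 * (2*m) : ℝ) = 4 * m by push_cast; ring, Real.sqrt_mul (by norm_num),
      show (4:ℝ) = 2^2 by norm_num, Real.sqrt_sq (by norm_num)]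
  have hsq : Real.sqrt (2 * m : ℝ) * Real.sqrt (2 * m : ℝ) = 2 * m := by
    rw [Real.mul_self_sqrt (by positivity)]
  have hsq2 : Real.sqrt (m:ℝ) * Real.sqrt (m:ℝ) = m := Real.mul_self_sqrt hm0.le
  have hfacm : (0:ℝ) < (m ! : ℝ) := by exact_mod_cast Nat.factorial_pos m
  have hs2m' : (0:ℝ) < Real.sqrt (2*m : ℝ) := Real.sqrt_pos.2 (by positivity)
  have key : (2*(m:ℝ)/Real.exp 1)^(2*m) = 4^m * (((m:ℝ)/Real.exp 1)^m)^2 := by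
    rw [show 2*(m:ℝ)/Real.exp 1 = 2 * ((m:ℝ)/Real.exp 1) by ring, mul_pow, ← pow_mul,
      show (2:ℝ)^(2*m) = 4^m by rw [pow_mul]; norm_num, pow_mul]; ring
  rw [Stirling.stirlingSeq, Stirling.stirlingSeq, hfac]
  push_cast
  rw [hs2m, key]
  have hne1 : ((m:ℝ)^m / Real.exp 1 ^ m) ≠ 0 := by positivity
  field_simp
  ring_nf
  rw [Real.sq_sqrt (by positivity), Real.sq_sqrt (by positivity)]
  ring

lemma cb_tendsto : Tendsto (fun m : ℕ => Real.sqrt m / 4 ^ m * (Nat.centralBinom m))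
    atTop (nhds (1 / Real.sqrt π)) := by
  have hsp : (0:ℝ) < Real.sqrt π := Real.sqrt_pos.2 Real.pi_pos
  have h2 : Tendsto (fun m : ℕ => Stirling.stirlingSeq (2*m)) atTop (nhds (Real.sqrt π)) :=
    Stirling.tendsto_stirlingSeq_sqrt_pi.comp
      (tendsto_atTop_mono (fun m => by simp [id]; omega) tendsto_id)
  have h3 : Tendsto (fun m : ℕ => Stirling.stirlingSeq (2*m) / (Stirling.stirlingSeq m)^2)
      atTop (nhds (Real.sqrt π / (Real.sqrt π)^2)) :=
    h2.div (Stirling.tendsto_stirlingSeq_sqrt_pi.pow 2) (by positivity)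
  have heq : Real.sqrt π / (Real.sqrt π)^2 = 1 / Real.sqrt π := by
    rw [sq]; field_simp
  rw [heq] at h3
  apply h3.congr'
  filter_upwards [eventually_ge_atTop 1] with m hm
  exact (cb_eq_stirling m hm).symm

lemma choose_lower (N t : ℕ) (ht : t ≤ N/2) :
    ∀ j, j ≤ t → (((N/2 - t : ℕ):ℝ)/((N/2 + t + 1 : ℕ):ℝ))^j * (N.choose (N/2) : ℝ)
      ≤ (N.choose (N/2 + j) : ℝ) := by
  have hcN : 2 * (N/2) ≤ N := by omega
  set c := N/2 with hc
  intro j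
  induction j with
  | zero => simp
  | succ j ih =>
    intro hj
    have h1 := ih (by omega)
    have hρ0 : (0:ℝ) ≤ ((c - t : ℕ):ℝ)/((c + t + 1 : ℕ):ℝ) := by positivity
    have hstep : ((c - t : ℕ):ℝ)/((c + t + 1 : ℕ):ℝ) * (N.choose (c+j) : ℝ)
        ≤ (N.choose (c+j+1) : ℝ) := by
      have hY : (N.choose (c+j+1):ℝ) = (N.choose (c+j):ℝ) * ((N-(c+j):ℕ):ℝ) / ((c+j+1:ℕ):ℝ) := by
        rw [eq_div_iff (by positivity)]
        exact_mod_cast Nat.choose_succ_right_eq N (c+j)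
      rw [hY, mul_comm (((c - t : ℕ):ℝ)/((c + t + 1 : ℕ):ℝ)), mul_div_assoc]
      apply mul_le_mul_of_nonneg_left _ (Nat.cast_nonneg _)
      apply div_le_div₀ (Nat.cast_nonneg _) _ (by positivity)
      · exact_mod_cast (by omega : c+j+1 ≤ c+t+1)
      · exact_mod_cast (by omega : c - t ≤ N - (c+j))
    calc (((c - t : ℕ):ℝ)/((c + t + 1 : ℕ):ℝ))^(j+1) * (N.choose c : ℝ)
        = ((c - t : ℕ):ℝ)/((c + t + 1 : ℕ):ℝ) * ((((c - t : ℕ):ℝ)/((c + t + 1 : ℕ):ℝ))^j * (N.choose c : ℝ)) := by ring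
      _ ≤ ((c - t : ℕ):ℝ)/((c + t + 1 : ℕ):ℝ) * (N.choose (c+j) : ℝ) :=
          mul_le_mul_of_nonneg_left h1 hρ0
      _ ≤ (N.choose (c+j+1) : ℝ) := hstep

lemma rho_tendsto (t : ℕ) :
    Tendsto (fun m : ℕ => (((m - t : ℕ):ℝ)/((m + t + 1 : ℕ):ℝ))^t) atTop (nhds 1) := by
  have hden : Tendsto (fun m : ℕ => (m:ℝ) + t + 1) atTop atTop := by
    apply tendsto_atTop_add_const_right
    apply tendsto_atTop_add_const_right
    exact tendsto_natCast_atTop_atTop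
  have hbase : Tendsto (fun m : ℕ => ((m:ℝ) - t)/((m:ℝ) + t + 1)) atTop (nhds 1) := by
    have h0 : Tendsto (fun m : ℕ => (2*(t:ℝ)+1)/((m:ℝ) + t + 1)) atTop (nhds 0) :=
      Tendsto.div_atTop tendsto_const_nhds hden
    have := tendsto_const_nhds (x := (1:ℝ)) (f := atTop (α := ℕ)) |>.sub h0
    rw [sub_zero] at this
    apply this.congr
    intro m
    have hd : ((m:ℝ) + t + 1) ≠ 0 := by positivity
    field_simp
    ring
  have : Tendsto (fun m : ℕ => (((m - t : ℕ):ℝ)/((m + t + 1 : ℕ):ℝ))) atTop (nhds 1) := by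
    apply hbase.congr'
    filter_upwards [eventually_ge_atTop t] with m hm
    rw [Nat.cast_sub hm]
    push_cast
    ring_nf
  have := this.pow t
  rwa [one_pow] at this

lemma tendsto_of_odd_even {f : ℕ → ℝ} {l : ℝ}
    (h1 : Tendsto (fun m => f (2*m+1)) atTop (nhds l))
    (h2 : Tendsto (fun m => f (2*m+2)) atTop (nhds l)) : Tendsto f atTop (nhds l) := by
  rw [tendsto_def] at *
  intro s hs
  obtain ⟨M1, hM1⟩ := mem_atTop_sets.mp (h1 s hs)
  obtain ⟨M2, hM2⟩ := mem_atTop_sets.mp (h2 s hs)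
  rw [mem_atTop_sets]
  refine ⟨2*(M1+M2)+1, fun n hn => ?_⟩
  rcases Nat.even_or_odd n with ⟨k, hk⟩ | ⟨k, hk⟩
  · have h := hM2 (k-1) (by omega)
    simpa [show 2*(k-1)+2 = n by omega] using h
  · have h := hM1 k (by omega)
    simpa [show 2*k+1 = n by omega] using h

lemma squeeze_case (Nf : ℕ → ℕ) (bf : ℕ → ℝ) (t : ℕ) (L : ℝ)
    (hb : ∀ m, 0 ≤ bf m)
    (hNd : ∀ m, (Nf m)/2 = m)
    (hhi : Tendsto (fun m => bf m * ((Nf m).choose m : ℝ)) atTop (nhds L)) :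
    Tendsto (fun m => bf m * ((Nf m).choose (m + t) : ℝ)) atTop (nhds L) := by
  have hlo : Tendsto (fun m : ℕ => (((m - t : ℕ):ℝ)/((m + t + 1 : ℕ):ℝ))^t *
      (bf m * ((Nf m).choose m : ℝ))) atTop (nhds L) := by
    have := (rho_tendsto t).mul hhi
    rwa [one_mul] at this
  apply tendsto_of_tendsto_of_tendsto_of_le_of_le' hlo hhi
  · filter_upwards [eventually_ge_atTop t] with m hm
    have h := choose_lower (Nf m) t (by rw [hNd m]; exact hm) t le_rfl
    rw [hNd m] at h
    calc (((m - t : ℕ):ℝ)/((m + t + 1 : ℕ):ℝ))^t * (bf m * ((Nf m).choose m : ℝ))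
        = bf m * ((((m - t : ℕ):ℝ)/((m + t + 1 : ℕ):ℝ))^t * ((Nf m).choose m : ℝ)) := by ring
      _ ≤ bf m * ((Nf m).choose (m + t) : ℝ) := mul_le_mul_of_nonneg_left h (hb m)
  · filter_upwards with m
    apply mul_le_mul_of_nonneg_left _ (hb m)
    have := Nat.choose_le_middle (m + t) (Nf m)
    rw [hNd m] at this
    exact_mod_cast this

lemma sqrt2_div2_mul : Real.sqrt 2 / 2 * (1 / Real.sqrt π) = 1 / Real.sqrt (2 * π) := by
  have h2 : Real.sqrt 2 * Real.sqrt 2 = 2 := Real.mul_self_sqrt (by norm_num)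
  have hsp : (0:ℝ) < Real.sqrt π := Real.sqrt_pos.2 Real.pi_pos
  have hs2 : (0:ℝ) < Real.sqrt 2 := Real.sqrt_pos.2 (by norm_num)
  rw [Real.sqrt_mul (by norm_num)]
  field_simp
  linear_combination h2

lemma gEven_tendsto : Tendsto (fun m : ℕ => Real.sqrt (2*m+2) / 2^(2*m+2) * ((2*m+1).choose m : ℝ))
    atTop (nhds (1 / Real.sqrt (2 * π))) := by
  have hcb : ∀ m : ℕ, Nat.centralBinom (m+1) = 2 * (2*m+1).choose m := by
    intro m
    have h1 : (2*m+1).choose (m+1) = (2*m+1).choose m := by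
      have := Nat.choose_symm (by omega : m ≤ 2*m+1)
      rwa [show 2*m+1-m = m+1 by omega] at this
    rw [Nat.centralBinom, show 2*(m+1) = (2*m+1)+1 by omega, Nat.choose_succ_succ, h1]
    omega
  have hc : Tendsto (fun m : ℕ => Real.sqrt (m+1) / 4 ^ (m+1) * (Nat.centralBinom (m+1)))
      atTop (nhds (1 / Real.sqrt π)) := by
    have := cb_tendsto.comp (tendsto_add_atTop_nat 1)
    apply this.congr
    intro m
    simp [Function.comp]
  have := (tendsto_const_nhds (x := Real.sqrt 2 / 2) (f := atTop (α := ℕ))).mul hc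
  rw [sqrt2_div2_mul] at this
  apply this.congr
  intro m
  have h1 : Real.sqrt (2*(m:ℝ)+2) = Real.sqrt 2 * Real.sqrt (m+1) := by
    rw [← Real.sqrt_mul (by norm_num)]
    congr 1
    ring
  have h2 : (2:ℝ)^(2*m+2) = 4^(m+1) := by
    rw [show 2*m+2 = 2*(m+1) by ring, pow_mul]; norm_num
  have h3 : ((2*m+1).choose m : ℝ) = (Nat.centralBinom (m+1) : ℝ) / 2 := by
    rw [hcb m]; push_cast; ring
  push_cast
  rw [h1, h2, h3]
  ring

lemma gOdd_tendsto : Tendsto (fun m : ℕ => Real.sqrt (2*m+1) / 2^(2*m+1) * ((2*m).choose m : ℝ))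
    atTop (nhds (1 / Real.sqrt (2 * π))) := by
  have ha : Tendsto (fun m : ℕ => Real.sqrt ((2*(m:ℝ)+1)/m) / 2) atTop (nhds (Real.sqrt 2 / 2)) := by
    have hin : Tendsto (fun m : ℕ => (2*(m:ℝ)+1)/m) atTop (nhds 2) := by
      have h0 : Tendsto (fun m : ℕ => 1/(m:ℝ)) atTop (nhds 0) := tendsto_one_div_atTop_nhds_zero_nat
      have := (tendsto_const_nhds (x := (2:ℝ)) (f := atTop (α := ℕ))).add h0
      rw [add_zero] at this
      apply this.congr'
      filter_upwards [eventually_ge_atTop 1] with m hm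
      have hm0 : ((m:ℝ)) ≠ 0 := by positivity
      field_simp
    exact ((Real.continuous_sqrt.tendsto 2).comp hin).div_const 2
  have := ha.mul cb_tendsto
  rw [sqrt2_div2_mul] at this
  apply this.congr'
  filter_upwards [eventually_ge_atTop 1] with m hm
  have hm0 : (0:ℝ) < m := by exact_mod_cast hm
  have hsm : (0:ℝ) < Real.sqrt m := Real.sqrt_pos.2 hm0
  have h1 : Real.sqrt ((2*(m:ℝ)+1)/m) = Real.sqrt (2*(m:ℝ)+1) / Real.sqrt m :=
    Real.sqrt_div (by positivity) _
  have h2 : (2:ℝ)^(2*m+1) = 2 * 4^m := by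
    rw [pow_succ, pow_mul]; norm_num
    ring
  rw [h1, h2]
  have hcb : (Nat.centralBinom m : ℝ) = ((2*m).choose m : ℝ) := by rw [Nat.centralBinom]
  rw [hcb]
  push_cast
  field_simp

/-- Local central limit type asymptotic: for every integer `u ≥ 0`,
`lim_{n→∞} (√n / 2^n) · C(n-1, ⌊(n+u)/2⌋) = 1/√(2π)`. -/
theorem stmt9 (u : ℕ) :
    Filter.Tendsto
      (fun n : ℕ ↦ Real.sqrt n / 2 ^ n * ((n - 1).choose ((n + u) / 2)))
      Filter.atTop (nhds (1 / Real.sqrt (2 * Real.pi))) := by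
  apply tendsto_of_odd_even
  · have h := squeeze_case (fun m => 2*m) (fun m : ℕ => Real.sqrt (2*m+1)/2^(2*m+1)) ((u+1)/2) _
      (fun m => by positivity) (fun m => by simp) gOdd_tendsto
    apply h.congr
    intro m
    have e1 : (2*m+1) - 1 = 2*m := by omega
    have e2 : (2*m+1+u)/2 = m + (u+1)/2 := by omega
    simp only [e1, e2]
    push_cast
    ring
  · have h := squeeze_case (fun m => 2*m+1) (fun m : ℕ => Real.sqrt (2*m+2)/2^(2*m+2)) (u/2+1) _
      (fun m => by positivity) (fun m => by show (2*m+1)/2 = m; omega) gEven_tendsto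
    apply h.congr
    intro m
    have e1 : (2*m+2) - 1 = 2*m+1 := by omega
    have e2 : (2*m+2+u)/2 = m + (u/2+1) := by omega
    simp only [e1, e2]
    push_cast
    ring
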